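/- For any prime p and integer j with 0 ≤ j ≤ p−1, C(p−1, j) ≡ (−1)^j·(1 − p·H_j) (mod p^2), where H_j is the j-th harmonic number (interpreted p-adically; the denominators in H_j are coprime to p since j ≤ p−1). -/
import Mathlib


theorem choose_p_sub_one_mod_p_sq (p : ℕ) (hp : p.Prime) (j : ℕ) (hj : j ≤ p - 1) :
    (((p - 1).choose j : ℕ) : ZMod (p ^ 2)) =
      (-1) ^ j * (1 - (p : ZMod (p ^ 2)) * ∑ i ∈ Finset.Icc 1 j, (i : ZMod (p ^ 2))⁻¹) := by
  induction j with
  | zero => simp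
  | succ j ih =>
    have hp1 : 1 ≤ p := hp.one_le
    have hj' : j ≤ p - 1 := le_trans (Nat.le_succ j) hj
    have hjp : j + 1 < p := by omega
    -- the key nat identity
    have hnat : (p - 1).choose (j + 1) * (j + 1) = (p - 1).choose j * (p - 1 - j) :=
      Nat.choose_succ_right_eq _ _
    set c : ZMod (p ^ 2) := ((j + 1 : ℕ) : ZMod (p ^ 2)) with hc
    have hcop : Nat.Coprime (j + 1) (p ^ 2) := by
      apply Nat.Coprime.pow_right
      exact Nat.coprime_comm.mp ((hp.coprime_iff_not_dvd).mpr
        (fun h => by have := Nat.le_of_dvd (by omega) h; omega))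
    have hu : IsUnit c := by
      rw [hc, ZMod.isUnit_iff_coprime]
      exact hcop
    have hinv : c * c⁻¹ = 1 := ZMod.mul_inv_of_unit c hu
    have hp2 : (p : ZMod (p ^ 2)) * (p : ZMod (p ^ 2)) = 0 := by
      have : ((p ^ 2 : ℕ) : ZMod (p ^ 2)) = 0 := ZMod.natCast_self _
      push_cast at this
      linear_combination this
    have key : ((p - 1).choose (j + 1) : ZMod (p ^ 2)) * c =
        ((p - 1).choose j : ZMod (p ^ 2)) * ((p : ZMod (p ^ 2)) - 1 - (j : ZMod (p ^ 2))) := by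
      have := congrArg (Nat.cast : ℕ → ZMod (p ^ 2)) hnat
      push_cast [Nat.cast_sub (by omega : j ≤ p - 1), Nat.cast_sub hp1] at this
      rw [hc]
      push_cast
      linear_combination this
    have hsum : ∑ i ∈ Finset.Icc 1 (j + 1), ((i : ℕ) : ZMod (p ^ 2))⁻¹ =
        (∑ i ∈ Finset.Icc 1 j, ((i : ℕ) : ZMod (p ^ 2))⁻¹) + c⁻¹ := by
      rw [Finset.sum_Icc_succ_top (by omega)]
    have := hu
    apply hu.mul_right_cancel (b := c)
    rw [key, ih hj', hsum]
    set S := ∑ i ∈ Finset.Icc 1 j, ((i : ℕ) : ZMod (p ^ 2))⁻¹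
    have hcast : c = (j : ZMod (p ^ 2)) + 1 := by rw [hc]; push_cast; ring
    linear_combination ((-1 : ZMod (p ^ 2)) ^ j * (-S)) * hp2 +
      ((-1 : ZMod (p ^ 2)) ^ j * (-(p : ZMod (p ^ 2)))) * hinv +
      ((-1 : ZMod (p ^ 2)) ^ j * (1 - (p : ZMod (p ^ 2)) * S)) * hcast
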